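/- Let R be a Hermitian positive semidefinite K×K complex matrix with orthonormal eigenvectors u₁, …, u_K and eigenvalues λ₁ ≥ λ₂ ≥ ⋯ ≥ λ_K ≥ 0, with λ₁ > 1. Let v(0) ∈ ℂ^K with u₁ᴴ v(0) ≠ 0, and define v(M) = R^M v(0) + ∑_{j=1}^{M} R^{M−j} d(j) for error vectors d(j) ∈ ℂ^K. Write d(j) = ∑_i a_{j,i} u_i and v(0) = ∑_i a_{0,i} u_i. If max_{2 ≤ i ≤ K} max_{0 ≤ j ≤ M} |a_{j,i}| = o( (1/(M+1)) · (λ₁ / max{λ₂, 1})^M ) as M → ∞, and the denominator sequence |∑_{j=0}^M a_{j,1} λ₁^{−j}|² stays bounded away from zero, then sin θ(M) → 0 as M → ∞, where cos θ(M) = |u₁ᴴ v(M)| / ‖v(M)‖. -/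

import Mathlib

open Matrix Filter

lemma dot_sum' {K L : ℕ} (v : Fin K → ℂ) (s : Finset (Fin L)) (w : Fin L → Fin K → ℂ) :
    v ⬝ᵥ (∑ i ∈ s, w i) = ∑ i ∈ s, v ⬝ᵥ w i := by
  simp only [dotProduct, Finset.sum_apply, Finset.mul_sum]
  exact Finset.sum_comm

lemma sum_dot' {K L : ℕ} (s : Finset (Fin L)) (w : Fin L → Fin K → ℂ) (v : Fin K → ℂ) :
    (∑ i ∈ s, w i) ⬝ᵥ v = ∑ i ∈ s, w i ⬝ᵥ v := by
  simp only [dotProduct, Finset.sum_apply, Finset.sum_mul]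
  exact Finset.sum_comm

lemma mulVec_sum'' {K L : ℕ} (A : Matrix (Fin K) (Fin K) ℂ) (s : Finset (Fin L))
    (w : Fin L → Fin K → ℂ) : A *ᵥ (∑ i ∈ s, w i) = ∑ i ∈ s, A *ᵥ w i := by
  ext k
  simp only [Matrix.mulVec, Finset.sum_apply]
  exact dot_sum' _ _ _

lemma conj_mul_self_eq' (z : ℂ) : (starRingEnd ℂ) z * z = ((‖z‖ ^ 2 : ℝ) : ℂ) := by
  rw [← Complex.normSq_eq_conj_mul_self, Complex.sq_norm]

theorem stmt_4 {K : ℕ} (hK : 2 ≤ K)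
    (R : Matrix (Fin K) (Fin K) ℂ) (hR : R.IsHermitian)
    (u : Fin K → (Fin K → ℂ)) (lam : Fin K → ℝ)
    (horth : ∀ i j, star (u i) ⬝ᵥ u j = if i = j then 1 else 0)
    (heig : ∀ i, R.mulVec (u i) = (lam i : ℂ) • u i)
    (hsort : Antitone lam)
    (hnn : ∀ i, 0 ≤ lam i)
    (hl1 : 1 < lam ⟨0, by omega⟩)
    (a : ℕ → Fin K → ℂ)
    (v0 : Fin K → ℂ) (hv0 : v0 = ∑ i, a 0 i • u i)
    (hv01 : a 0 ⟨0, by omega⟩ ≠ 0)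
    (d : ℕ → Fin K → ℂ) (hd : ∀ j, 1 ≤ j → d j = ∑ i, a j i • u i)
    (v : ℕ → Fin K → ℂ)
    (hv : ∀ M, v M = (R ^ M).mulVec v0
          + ∑ j ∈ Finset.Icc 1 M, (R ^ (M - j)).mulVec (d j))
    (γ : ℕ → ℝ)
    (hγ : ∀ M, ∀ i : Fin K, i ≠ ⟨0, by omega⟩ → ∀ j ≤ M, ‖a j i‖ ≤ γ M)
    (hlo : γ =o[atTop] fun M : ℕ =>
        (1 / (M + 1 : ℝ)) * (lam ⟨0, by omega⟩ / max (lam ⟨1, by omega⟩) 1) ^ M)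
    (c : ℝ) (hc : 0 < c)
    (hden : ∀ M : ℕ, c ≤ ‖∑ j ∈ Finset.range (M + 1),
        a j ⟨0, by omega⟩ * ((lam ⟨0, by omega⟩ : ℂ))⁻¹ ^ j‖ ^ 2) :
    Tendsto (fun M => Real.sqrt (1 -
        (‖star (u ⟨0, by omega⟩) ⬝ᵥ v M‖ / Real.sqrt (∑ k, ‖v M k‖ ^ 2)) ^ 2))
      atTop (nhds 0) := by
  have hK0 : 0 < K := by omega
  set i0 : Fin K := ⟨0, by omega⟩ with hi0def
  set i1 : Fin K := ⟨1, by omega⟩ with hi1def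
  set l1 : ℝ := lam i0 with hl1def
  set m2 : ℝ := max (lam i1) 1 with hm2def
  have hl1pos : 0 < l1 := lt_trans one_pos hl1
  have hl1ne : (l1 : ℂ) ≠ 0 := by exact_mod_cast ne_of_gt hl1pos
  have hm2one : 1 ≤ m2 := le_max_right _ _
  have hm2pos : 0 < m2 := lt_of_lt_of_le one_pos hm2one
  have hne10 : i1 ≠ i0 := by
    simp only [hi1def, hi0def, ne_eq, Fin.mk.injEq]
    omega
  -- γ is nonnegative
  have hγ0 : ∀ M, 0 ≤ γ M := fun M =>
    le_trans (norm_nonneg (a 0 i1)) (hγ M i1 hne10 0 (Nat.zero_le M))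
  -- eigenvalues below the top one are at most m2
  have hlam_le : ∀ i : Fin K, i ≠ i0 → lam i ≤ m2 := by
    intro i hi
    have h1le : i1 ≤ i := by
      have : (i : ℕ) ≠ 0 := by
        intro h
        exact hi (Fin.ext h)
      exact Fin.mk_le_of_le_val (by omega)
    exact le_trans (hsort h1le) (le_max_left _ _)
  -- powers of R on eigenvectors
  have hpow : ∀ (m : ℕ) (i : Fin K), (R ^ m).mulVec (u i) = ((lam i : ℂ) ^ m) • u i := by
    intro m i
    induction m with
    | zero => simp
    | succ m ih =>
      rw [pow_succ, ← Matrix.mulVec_mulVec, heig, Matrix.mulVec_smul, ih,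
        smul_smul, ← pow_succ']
  have hpowsum : ∀ (m : ℕ) (f : Fin K → ℂ),
      (R ^ m).mulVec (∑ i, f i • u i) = ∑ i, ((lam i : ℂ) ^ m * f i) • u i := by
    intro m f
    rw [show (∑ i, f i • u i) = ∑ i, (fun i => f i • u i) i from rfl, mulVec_sum'']
    refine Finset.sum_congr rfl fun i _ => ?_
    rw [Matrix.mulVec_smul, hpow, smul_smul, mul_comm]
  -- the coefficients of v M in the eigenbasis
  set b : ℕ → Fin K → ℂ :=
    fun M i => ∑ j ∈ Finset.range (M + 1), (lam i : ℂ) ^ (M - j) * a j i with hbdef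
  have hbsplit : ∀ M i, b M i = (lam i : ℂ) ^ M * a 0 i
      + ∑ j ∈ Finset.Icc 1 M, (lam i : ℂ) ^ (M - j) * a j i := by
    intro M i
    rw [hbdef]
    simp only
    rw [Finset.range_eq_Ico, Finset.sum_eq_sum_Ico_succ_bot (Nat.succ_pos M),
      Nat.succ_eq_add_one, Finset.Ico_add_one_right_eq_Icc, Nat.sub_zero]
  have hvb : ∀ M, v M = ∑ i, b M i • u i := by
    intro M
    rw [hv, hv0, hpowsum]
    have : ∑ j ∈ Finset.Icc 1 M, (R ^ (M - j)).mulVec (d j)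
        = ∑ j ∈ Finset.Icc 1 M, ∑ i, ((lam i : ℂ) ^ (M - j) * a j i) • u i := by
      refine Finset.sum_congr rfl fun j hj => ?_
      rw [hd j (Finset.mem_Icc.mp hj).1, hpowsum]
    rw [this, Finset.sum_comm, ← Finset.sum_add_distrib]
    refine Finset.sum_congr rfl fun i _ => ?_
    rw [hbsplit, add_smul, Finset.sum_smul]
  -- dot products with eigenvectors
  have hdot : ∀ M (k : Fin K), star (u k) ⬝ᵥ v M = b M k := by
    intro M k
    rw [hvb, show (∑ i, b M i • u i) = ∑ i, (fun i => b M i • u i) i from rfl, dot_sum']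
    simp only [dotProduct_smul, horth, smul_eq_mul, mul_ite, mul_one, mul_zero]
    simp
  -- Parseval
  have hS : ∀ M, ∑ k, ‖v M k‖ ^ 2 = ∑ i, ‖b M i‖ ^ 2 := by
    intro M
    have h1 : star (v M) ⬝ᵥ v M = ∑ i, ((‖b M i‖ ^ 2 : ℝ) : ℂ) := by
      nth_rewrite 1 [hvb]
      rw [show star (∑ i, b M i • u i) = ∑ i, (fun i => (starRingEnd ℂ (b M i)) • star (u i)) i by
        rw [star_sum]; exact Finset.sum_congr rfl fun i _ => by rw [star_smul]; rfl]
      rw [sum_dot']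
      refine Finset.sum_congr rfl fun i _ => ?_
      rw [smul_dotProduct, hdot, smul_eq_mul, conj_mul_self_eq']
    have h2 : star (v M) ⬝ᵥ v M = ∑ k, ((‖v M k‖ ^ 2 : ℝ) : ℂ) := by
      rw [dotProduct]
      exact Finset.sum_congr rfl fun k _ => conj_mul_self_eq' (v M k)
    have h3 : ((∑ k, ‖v M k‖ ^ 2 : ℝ) : ℂ) = ((∑ i, ‖b M i‖ ^ 2 : ℝ) : ℂ) := by
      push_cast at h1 h2 ⊢
      rw [← h2, h1]
    exact_mod_cast h3
  -- lower bound on dominant coefficient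
  have hb0 : ∀ M, Real.sqrt c * l1 ^ M ≤ ‖b M i0‖ := by
    intro M
    have hfac : b M i0 = (l1 : ℂ) ^ M
        * ∑ j ∈ Finset.range (M + 1), a j i0 * ((l1 : ℂ))⁻¹ ^ j := by
      rw [hbdef]
      simp only
      rw [Finset.mul_sum]
      refine Finset.sum_congr rfl fun j hj => ?_
      have hjM : j ≤ M := Nat.lt_succ_iff.mp (Finset.mem_range.mp hj)
      rw [inv_pow, mul_comm (a j i0), ← mul_assoc, ← pow_sub₀ _ hl1ne hjM]
    have hnorm : ‖b M i0‖ = l1 ^ M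
        * ‖∑ j ∈ Finset.range (M + 1), a j i0 * ((l1 : ℂ))⁻¹ ^ j‖ := by
      rw [hfac, norm_mul, norm_pow, Complex.norm_real, Real.norm_of_nonneg hl1pos.le]
    have hden' : Real.sqrt c ≤ ‖∑ j ∈ Finset.range (M + 1), a j i0 * ((l1 : ℂ))⁻¹ ^ j‖ := by
      have := Real.sqrt_le_sqrt (hden M)
      rwa [Real.sqrt_sq (norm_nonneg _)] at this
    rw [hnorm, mul_comm]
    exact mul_le_mul_of_nonneg_left hden' (pow_nonneg hl1pos.le M)
  have hb0pos : ∀ M, 0 < ‖b M i0‖ := fun M =>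
    lt_of_lt_of_le (mul_pos (Real.sqrt_pos.mpr hc) (pow_pos hl1pos M)) (hb0 M)
  -- upper bound on the other coefficients
  set B : ℕ → ℝ := fun M => ((M : ℝ) + 1) * (m2 ^ M * γ M) with hBdef
  have hB0 : ∀ M, 0 ≤ B M := fun M =>
    mul_nonneg (by positivity) (mul_nonneg (pow_nonneg hm2pos.le M) (hγ0 M))
  have hbi : ∀ M (i : Fin K), i ≠ i0 → ‖b M i‖ ≤ B M := by
    intro M i hi
    calc ‖b M i‖ ≤ ∑ j ∈ Finset.range (M + 1), ‖(lam i : ℂ) ^ (M - j) * a j i‖ :=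
          norm_sum_le _ _
    _ ≤ ∑ j ∈ Finset.range (M + 1), (m2 ^ M * γ M) := by
        refine Finset.sum_le_sum fun j hj => ?_
        have hjM : j ≤ M := Nat.lt_succ_iff.mp (Finset.mem_range.mp hj)
        rw [norm_mul, norm_pow, Complex.norm_real, Real.norm_of_nonneg (hnn i)]
        refine mul_le_mul ?_ (hγ M i hi j hjM) (norm_nonneg _)
          (pow_nonneg hm2pos.le M)
        calc lam i ^ (M - j) ≤ m2 ^ (M - j) :=
              pow_le_pow_left₀ (hnn i) (hlam_le i hi) _
        _ ≤ m2 ^ M := pow_le_pow_right₀ hm2one (Nat.sub_le M j)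
    _ = B M := by
        rw [Finset.sum_const, Finset.card_range, nsmul_eq_mul, hBdef]
        push_cast
        ring
  -- the comparison function
  set g : ℕ → ℝ := fun M => (Real.sqrt K * B M) / (Real.sqrt c * l1 ^ M) with hgdef
  -- pointwise bound
  have hub : ∀ M, Real.sqrt (1 -
      (‖star (u i0) ⬝ᵥ v M‖ / Real.sqrt (∑ k, ‖v M k‖ ^ 2)) ^ 2) ≤ g M := by
    intro M
    set cM : ℝ := ‖b M i0‖ with hcMdef
    set T : ℝ := ∑ i ∈ Finset.univ.erase i0, ‖b M i‖ ^ 2 with hTdef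
    have hT0 : 0 ≤ T := Finset.sum_nonneg fun i _ => sq_nonneg _
    have hsplit : ∑ i, ‖b M i‖ ^ 2 = cM ^ 2 + T :=
      (Finset.add_sum_erase _ (fun i => ‖b M i‖ ^ 2) (Finset.mem_univ i0)).symm
    set S : ℝ := ∑ k, ‖v M k‖ ^ 2 with hSdef
    have hSeq : S = cM ^ 2 + T := by rw [hSdef, hS, hsplit]
    have hcM2pos : 0 < cM ^ 2 := pow_pos (hb0pos M) 2
    have hSpos : 0 < S := by rw [hSeq]; linarith
    have hnum : ‖star (u i0) ⬝ᵥ v M‖ = cM := by rw [hdot]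
    have e1 : 1 - (‖star (u i0) ⬝ᵥ v M‖ / Real.sqrt S) ^ 2 = T / S := by
      rw [hnum, div_pow, Real.sq_sqrt hSpos.le, eq_div_iff (ne_of_gt hSpos),
        sub_mul, one_mul, div_mul_cancel₀ _ (ne_of_gt hSpos), hSeq]
      ring
    rw [e1]
    have hcMpos : (0 : ℝ) < cM := hb0pos M
    have e2 : Real.sqrt (T / S) ≤ Real.sqrt T / cM := by
      rw [← Real.sqrt_sq hcMpos.le, ← Real.sqrt_div hT0]
      refine Real.sqrt_le_sqrt ?_
      refine div_le_div_of_nonneg_left hT0 hcM2pos ?_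
      rw [hSeq]; linarith
    refine le_trans e2 ?_
    have e3 : Real.sqrt T ≤ Real.sqrt K * B M := by
      have hTle : T ≤ (K : ℝ) * (B M) ^ 2 := by
        calc T ≤ (Finset.univ.erase i0).card • (B M) ^ 2 := by
              refine Finset.sum_le_card_nsmul _ _ _ fun i hi => ?_
              have hi' : i ≠ i0 := (Finset.mem_erase.mp hi).1
              exact pow_le_pow_left₀ (norm_nonneg _) (hbi M i hi') 2
        _ ≤ (K : ℝ) * (B M) ^ 2 := by
              rw [nsmul_eq_mul]
              refine mul_le_mul_of_nonneg_right ?_ (sq_nonneg _)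
              have : (Finset.univ.erase i0).card ≤ K := by
                refine le_trans (Finset.card_le_card (Finset.erase_subset _ _)) ?_
                simp
              exact_mod_cast this
      calc Real.sqrt T ≤ Real.sqrt ((K : ℝ) * (B M) ^ 2) := Real.sqrt_le_sqrt hTle
      _ = Real.sqrt K * B M := by
          rw [Real.sqrt_mul (Nat.cast_nonneg K), Real.sqrt_sq (hB0 M)]
    rw [hgdef]
    exact div_le_div₀ (mul_nonneg (Real.sqrt_nonneg _) (hB0 M)) e3
      (mul_pos (Real.sqrt_pos.mpr hc) (pow_pos hl1pos M)) (hb0 M)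
  -- the comparison function tends to zero
  have hg : Tendsto g atTop (nhds 0) := by
    have hdiv : Tendsto (fun M => γ M / ((1 / (M + 1 : ℝ)) * (l1 / m2) ^ M))
        atTop (nhds 0) := hlo.tendsto_div_nhds_zero
    have heqg : g = fun M =>
        (Real.sqrt K / Real.sqrt c) * (γ M / ((1 / (M + 1 : ℝ)) * (l1 / m2) ^ M)) := by
      funext M
      rw [hgdef, hBdef]
      simp only
      rw [div_pow]
      have hM1 : ((M : ℝ) + 1) ≠ 0 := by positivity
      have hl1M : l1 ^ M ≠ 0 := pow_ne_zero _ (ne_of_gt hl1pos)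
      have hm2M : m2 ^ M ≠ 0 := pow_ne_zero _ (ne_of_gt hm2pos)
      have hsc : Real.sqrt c ≠ 0 := ne_of_gt (Real.sqrt_pos.mpr hc)
      field_simp
    rw [heqg]
    have := hdiv.const_mul (Real.sqrt K / Real.sqrt c)
    simpa using this
  exact squeeze_zero (fun M => Real.sqrt_nonneg _) hub hg
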